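/- Let λ > 1, r_R > 0, μ_R ≥ 0, and θ₀ ∈ ℝ. Define β : ℝ → ℝ by β(t) = r_R + μ_R + λ·r_R·cos(θ₀ − t/r_R). Suppose t₁ < t₂ satisfy β(t₁) = β(t₂) = μ_R, β'(t₁) = √(λ² − 1), β'(t₂) = −√(λ² − 1), and (t₂ − t₁)/r_R < 2π. Then (t₂ − t₁)/r_R = 2π − 2·arccos(1/λ). -/

import Mathlib

open Real

/-- For `e = 1` and `λ > 1`, the angle of the `R` segment of a non-trivial
optimal `SRS` path equals `2π − 2 arccos(1/λ)`. -/
theorem SRS_right_turn_angle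
    (lam rR μR θ₀ t₁ t₂ : ℝ) (β : ℝ → ℝ)
    (hlam : 1 < lam) (hrR : 0 < rR) (hμR : 0 ≤ μR)
    (hβ : ∀ t, β t = rR + μR + lam * rR * Real.cos (θ₀ - t / rR))
    (ht : t₁ < t₂)
    (hβ₁ : β t₁ = μR) (hβ₂ : β t₂ = μR)
    (hd₁ : deriv β t₁ = Real.sqrt (lam ^ 2 - 1))
    (hd₂ : deriv β t₂ = -Real.sqrt (lam ^ 2 - 1))
    (hlt : (t₂ - t₁) / rR < 2 * π) :
    (t₂ - t₁) / rR = 2 * π - 2 * Real.arccos (1 / lam) := by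
  have hlam0 : (0:ℝ) < lam := by linarith
  have hlamne : lam ≠ 0 := ne_of_gt hlam0
  have hrRne : rR ≠ 0 := ne_of_gt hrR
  have hβfun : β = fun t => rR + μR + lam * rR * Real.cos (θ₀ - t / rR) := funext hβ
  -- derivative computation
  have hderiv : ∀ t : ℝ, deriv β t = lam * Real.sin (θ₀ - t / rR) := by
    intro t
    have h1 : HasDerivAt (fun t : ℝ => θ₀ - t / rR) (-(1 / rR)) t := by
      simpa using ((hasDerivAt_id t).div_const rR).const_sub θ₀
    have h2 := h1.cos
    have h3 := (h2.const_mul (lam * rR)).const_add (rR + μR)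
    rw [hβfun]
    rw [h3.deriv]
    field_simp
  set x₁ := θ₀ - t₁ / rR with hx₁
  set x₂ := θ₀ - t₂ / rR with hx₂
  set A := Real.arccos (-(1 / lam)) with hA
  have h1lam : 0 < 1 / lam := by positivity
  have h1lam1 : 1 / lam < 1 := by
    rw [div_lt_one hlam0]; linarith
  have hcosA : Real.cos A = -(1 / lam) :=
    Real.cos_arccos (by linarith) (by linarith)
  have hsq : (0:ℝ) ≤ lam ^ 2 - 1 := by nlinarith
  have hsinA : Real.sin A = Real.sqrt (lam ^ 2 - 1) / lam := by
    rw [hA, Real.sin_arccos]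
    rw [show (1 : ℝ) - (-(1 / lam)) ^ 2 = (lam ^ 2 - 1) / lam ^ 2 by field_simp; try ring]
    rw [Real.sqrt_div hsq]
    rw [Real.sqrt_sq hlam0.le]
  have hApos : 0 < A := by
    rw [hA, Real.arccos_pos]; linarith
  have hAle : A ≤ π := Real.arccos_le_pi _
  -- cos and sin at the two points
  have hcos1 : Real.cos x₁ = -(1 / lam) := by
    have h := hβ₁
    rw [hβ t₁] at h
    have h3 : lam * rR * Real.cos x₁ = lam * rR * (-(1 / lam)) := by
      rw [show lam * rR * (-(1 / lam)) = -rR by field_simp; try ring]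
      linarith
    exact mul_left_cancel₀ (mul_ne_zero hlamne hrRne) h3
  have hcos2 : Real.cos x₂ = -(1 / lam) := by
    have h := hβ₂
    rw [hβ t₂] at h
    have h3 : lam * rR * Real.cos x₂ = lam * rR * (-(1 / lam)) := by
      rw [show lam * rR * (-(1 / lam)) = -rR by field_simp; try ring]
      linarith
    exact mul_left_cancel₀ (mul_ne_zero hlamne hrRne) h3
  have hsin1 : Real.sin x₁ = Real.sqrt (lam ^ 2 - 1) / lam := by
    have h := hd₁
    rw [hderiv t₁] at h
    have h3 : lam * Real.sin x₁ = lam * (Real.sqrt (lam ^ 2 - 1) / lam) := by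
      rw [show lam * (Real.sqrt (lam ^ 2 - 1) / lam) = Real.sqrt (lam ^ 2 - 1) by field_simp; try ring]
      linarith
    exact mul_left_cancel₀ hlamne h3
  have hsin2 : Real.sin x₂ = -(Real.sqrt (lam ^ 2 - 1) / lam) := by
    have h := hd₂
    rw [hderiv t₂] at h
    have h3 : lam * Real.sin x₂ = lam * (-(Real.sqrt (lam ^ 2 - 1) / lam)) := by
      rw [show lam * (-(Real.sqrt (lam ^ 2 - 1) / lam)) = -Real.sqrt (lam ^ 2 - 1) by field_simp; try ring]
      linarith
    exact mul_left_cancel₀ hlamne h3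
  have hsqrtsq : Real.sqrt (lam ^ 2 - 1) ^ 2 = lam ^ 2 - 1 := Real.sq_sqrt hsq
  -- cos (x₁ - A) = 1
  have hinv : lam * lam⁻¹ = 1 := mul_inv_cancel₀ hlamne
  have hmulself : Real.sqrt (lam ^ 2 - 1) * Real.sqrt (lam ^ 2 - 1) = lam ^ 2 - 1 :=
    Real.mul_self_sqrt hsq
  have hc1 : Real.cos (x₁ - A) = 1 := by
    rw [Real.cos_sub, hcos1, hcosA, hsin1, hsinA]
    linear_combination hmulself / lam ^ 2 + (lam * lam⁻¹ + 1) * hinv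
  have hc2 : Real.cos (x₂ + A) = 1 := by
    rw [Real.cos_add, hcos2, hcosA, hsin2, hsinA]
    linear_combination hmulself / lam ^ 2 + (lam * lam⁻¹ + 1) * hinv
  obtain ⟨k, hk⟩ := (Real.cos_eq_one_iff _).mp hc1
  obtain ⟨n, hn⟩ := (Real.cos_eq_one_iff _).mp hc2
  -- D = x₁ - x₂
  have hD : (t₂ - t₁) / rR = x₁ - x₂ := by
    rw [hx₁, hx₂]; ring
  have hDpos : 0 < (t₂ - t₁) / rR := div_pos (by linarith) hrR
  have hsum : (t₂ - t₁) / rR = ((k - n : ℤ) : ℝ) * (2 * π) + 2 * A := by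
    push_cast
    rw [hD]
    linarith [hk, hn]
  have hm0 : (k - n : ℤ) = 0 := by
    have hπ := Real.pi_pos
    have h2πpos : (0:ℝ) < 2 * π := by linarith
    have hkey : ((k - n : ℤ) : ℝ) * (2 * π) = (t₂ - t₁) / rR - 2 * A := by linarith [hsum]
    have h1 : (-1 : ℝ) * (2 * π) < ((k - n : ℤ) : ℝ) * (2 * π) := by
      rw [hkey]; linarith [hDpos, hAle]
    have h2 : ((k - n : ℤ) : ℝ) * (2 * π) < (1 : ℝ) * (2 * π) := by
      rw [hkey]; linarith [hlt, hApos]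
    have h1' : (-1 : ℝ) < ((k - n : ℤ) : ℝ) := lt_of_mul_lt_mul_right h1 h2πpos.le
    have h2' : ((k - n : ℤ) : ℝ) < 1 := lt_of_mul_lt_mul_right h2 h2πpos.le
    have h1'' : (-1 : ℤ) < k - n := by exact_mod_cast h1'
    have h2'' : (k - n : ℤ) < 1 := by exact_mod_cast h2'
    omega
  rw [hm0] at hsum
  simp at hsum
  rw [hsum, hA, show -(1/lam) = -(1/lam) from rfl]
  rw [Real.arccos_neg]
  ring
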